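/- arXiv:1805.00887 — 3 statements merged into one kernel-verified Lean document; each statement's English description precedes it below -/
import Mathlib

section
/- Let (X,d) be a compact metric space, 𝕀 = {S_1,...,S_N} an IFS of bi-Lipschitz contractions on X with compact condensation set C, upper Lipschitz dimension s, and let d = dim_H F_C. Suppose 0 < ℋ^d(C) < ∞. If d > s, then 0 < ℋ^d(F_C) < ∞. -/
open Metric Filter Set MeasureTheory Topology
open scoped ENNReal NNReal
set_option linter.unusedSectionVars false

/-- The upper Lipschitz constant `Lip⁺(S) = sup_{x ≠ y} d(S x, S y)/d(x,y)`. -/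
noncomputable def LipPlus {X : Type*} [MetricSpace X] (S : X → X) : ℝ :=
  sSup {r : ℝ | ∃ x y : X, x ≠ y ∧ r = dist (S x) (S y) / dist x y}

/-- The lower Lipschitz constant `Lip⁻(S) = inf_{x ≠ y} d(S x, S y)/d(x,y)`. -/
noncomputable def LipMinus {X : Type*} [MetricSpace X] (S : X → X) : ℝ :=
  sInf {r : ℝ | ∃ x y : X, x ≠ y ∧ r = dist (S x) (S y) / dist x y}

/-- `S` is a bi-Lipschitz contraction: `0 < Lip⁻(S) ≤ Lip⁺(S) < 1`,
with `Lip⁺(S)` and `Lip⁻(S)` genuine upper/lower Lipschitz bounds. -/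
def IsBiLipContraction {X : Type*} [MetricSpace X] (S : X → X) : Prop :=
  (∀ x y : X, dist (S x) (S y) ≤ LipPlus S * dist x y) ∧
  (∀ x y : X, LipMinus S * dist x y ≤ dist (S x) (S y)) ∧
  0 < LipMinus S ∧ LipMinus S ≤ LipPlus S ∧ LipPlus S < 1

/-- `S_𝐢 = S_{i₁} ∘ ⋯ ∘ S_{i_k}` for a finite word `𝐢` over `{1,…,N}`. -/
def compList {X : Type*} {N : ℕ} (S : Fin N → X → X) : List (Fin N) → X → X
  | [] => id
  | i :: w => S i ∘ compList S w

section AuxLip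

variable {X : Type*} [MetricSpace X]

lemma lipPlus_nonneg (f : X → X) : 0 ≤ LipPlus f := by
  apply Real.sSup_nonneg
  rintro r ⟨x, y, hxy, rfl⟩
  exact div_nonneg dist_nonneg dist_nonneg

lemma lipPlus_le {f : X → X} {K : ℝ} (hK : 0 ≤ K)
    (h : ∀ x y, dist (f x) (f y) ≤ K * dist x y) : LipPlus f ≤ K := by
  apply Real.sSup_le _ hK
  rintro r ⟨x, y, hxy, rfl⟩
  exact (div_le_iff₀ (dist_pos.2 hxy)).2 (h x y)

lemma bddAbove_ratio {f : X → X} {K : ℝ}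
    (h : ∀ x y, dist (f x) (f y) ≤ K * dist x y) :
    BddAbove {r : ℝ | ∃ x y : X, x ≠ y ∧ r = dist (f x) (f y) / dist x y} := by
  refine ⟨K, ?_⟩
  rintro r ⟨x, y, hxy, rfl⟩
  exact (div_le_iff₀ (dist_pos.2 hxy)).2 (h x y)

lemma dist_le_lipPlus {f : X → X} {K : ℝ}
    (h : ∀ x y, dist (f x) (f y) ≤ K * dist x y) (x y : X) :
    dist (f x) (f y) ≤ LipPlus f * dist x y := by
  rcases eq_or_ne x y with rfl | hxy
  · simp
  · have hmem : dist (f x) (f y) / dist x y ≤ LipPlus f :=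
      le_csSup (bddAbove_ratio h) ⟨x, y, hxy, rfl⟩
    have hd : (0:ℝ) < dist x y := dist_pos.2 hxy
    calc dist (f x) (f y) = dist (f x) (f y) / dist x y * dist x y := by
          field_simp
      _ ≤ LipPlus f * dist x y := mul_le_mul_of_nonneg_right hmem dist_nonneg

lemma lipPlus_pos [Nontrivial X] {f : X → X} {K m : ℝ} (hm : 0 < m)
    (h : ∀ x y, dist (f x) (f y) ≤ K * dist x y)
    (hlow : ∀ x y, m * dist x y ≤ dist (f x) (f y)) : 0 < LipPlus f := by
  obtain ⟨x, y, hxy⟩ := exists_pair_ne X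
  have hd : (0:ℝ) < dist x y := dist_pos.2 hxy
  have h1 : m ≤ dist (f x) (f y) / dist x y := by
    rw [le_div_iff₀ hd]
    exact hlow x y
  exact hm.trans_le (h1.trans (le_csSup (bddAbove_ratio h) ⟨x, y, hxy, rfl⟩))

variable {N : ℕ} {S : Fin N → X → X} (hS : ∀ i, IsBiLipContraction (S i))
include hS

lemma lipPlus_S_nonneg (i : Fin N) : 0 ≤ LipPlus (S i) :=
  ((hS i).2.2.1.trans_le (hS i).2.2.2.1).le

omit hS in
lemma compList_append (l₁ l₂ : List (Fin N)) :
    compList S (l₁ ++ l₂) = compList S l₁ ∘ compList S l₂ := by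
  induction l₁ with
  | nil => rfl
  | cons i l ih =>
    show compList S (i :: (l ++ l₂)) = _
    simp only [compList, ih, Function.comp_assoc]

lemma prodL_nonneg (l : List (Fin N)) :
    0 ≤ (l.map fun i => LipPlus (S i)).prod := by
  induction l with
  | nil => simp
  | cons i l ih =>
    simp only [List.map_cons, List.prod_cons]
    exact mul_nonneg (lipPlus_S_nonneg hS i) ih

lemma prodL_le_one (l : List (Fin N)) :
    (l.map fun i => LipPlus (S i)).prod ≤ 1 := by
  induction l with
  | nil => simp
  | cons i l ih =>
    simp only [List.map_cons, List.prod_cons]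
    exact mul_le_one₀ ((hS i).2.2.2.2.le) (prodL_nonneg hS l) ih

lemma compList_dist_le (l : List (Fin N)) (x y : X) :
    dist (compList S l x) (compList S l y) ≤
      (l.map fun i => LipPlus (S i)).prod * dist x y := by
  induction l with
  | nil => simp [compList]
  | cons i l ih =>
    have h1 := (hS i).1 (compList S l x) (compList S l y)
    have h2 : LipPlus (S i) * dist (compList S l x) (compList S l y) ≤
        LipPlus (S i) * ((l.map fun i => LipPlus (S i)).prod * dist x y) :=
      mul_le_mul_of_nonneg_left ih (lipPlus_S_nonneg hS i)
    simp only [compList, Function.comp_apply, List.map_cons, List.prod_cons, mul_assoc]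
    exact h1.trans h2

lemma compList_dist_ge (l : List (Fin N)) (x y : X) :
    (l.map fun i => LipMinus (S i)).prod * dist x y ≤
      dist (compList S l x) (compList S l y) := by
  induction l with
  | nil => simp [compList]
  | cons i l ih =>
    have h1 := (hS i).2.1 (compList S l x) (compList S l y)
    have h2 : LipMinus (S i) * ((l.map fun i => LipMinus (S i)).prod * dist x y) ≤
        LipMinus (S i) * dist (compList S l x) (compList S l y) :=
      mul_le_mul_of_nonneg_left ih (hS i).2.2.1.le
    simp only [compList, Function.comp_apply, List.map_cons, List.prod_cons, mul_assoc]
    exact h2.trans h1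

lemma prodM_pos (l : List (Fin N)) :
    0 < (l.map fun i => LipMinus (S i)).prod := by
  induction l with
  | nil => simp
  | cons i l ih =>
    simp only [List.map_cons, List.prod_cons]
    exact mul_pos (hS i).2.2.1 ih

lemma compList_dist_le' (l : List (Fin N)) (x y : X) :
    dist (compList S l x) (compList S l y) ≤ LipPlus (compList S l) * dist x y :=
  dist_le_lipPlus (compList_dist_le hS l) x y

lemma lipPlus_compList_pos [Nontrivial X] (l : List (Fin N)) :
    0 < LipPlus (compList S l) :=
  lipPlus_pos (prodM_pos hS l) (compList_dist_le hS l) (compList_dist_ge hS l)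

lemma lipPlus_compList_le_prod (l : List (Fin N)) :
    LipPlus (compList S l) ≤ (l.map fun i => LipPlus (S i)).prod :=
  lipPlus_le (prodL_nonneg hS l) (compList_dist_le hS l)

lemma lipPlus_compList_lt_one (l : List (Fin N)) (hl : l ≠ []) :
    LipPlus (compList S l) < 1 := by
  refine (lipPlus_compList_le_prod hS l).trans_lt ?_
  cases l with
  | nil => exact absurd rfl hl
  | cons i l =>
    simp only [List.map_cons, List.prod_cons]
    calc LipPlus (S i) * (l.map fun i => LipPlus (S i)).prod ≤ LipPlus (S i) * 1 :=
          mul_le_mul_of_nonneg_left (prodL_le_one hS l) (lipPlus_S_nonneg hS i)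
      _ < 1 := by rw [mul_one]; exact (hS i).2.2.2.2

lemma lipPlus_compList_append (l₁ l₂ : List (Fin N)) :
    LipPlus (compList S (l₁ ++ l₂)) ≤
      LipPlus (compList S l₁) * LipPlus (compList S l₂) := by
  apply lipPlus_le (mul_nonneg (lipPlus_nonneg _) (lipPlus_nonneg _))
  intro x y
  rw [compList_append]
  calc dist (compList S l₁ (compList S l₂ x)) (compList S l₁ (compList S l₂ y))
      ≤ LipPlus (compList S l₁) * dist (compList S l₂ x) (compList S l₂ y) :=
        compList_dist_le' hS l₁ _ _
    _ ≤ LipPlus (compList S l₁) * (LipPlus (compList S l₂) * dist x y) :=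
        mul_le_mul_of_nonneg_left (compList_dist_le' hS l₂ x y) (lipPlus_nonneg _)
    _ = LipPlus (compList S l₁) * LipPlus (compList S l₂) * dist x y := by ring

lemma compList_lipschitzWith (l : List (Fin N)) :
    LipschitzWith (LipPlus (compList S l)).toNNReal (compList S l) := by
  apply LipschitzWith.of_dist_le_mul
  intro x y
  rw [Real.coe_toNNReal _ (lipPlus_nonneg _)]
  exact compList_dist_le' hS l x y

end AuxLip


section AuxLip2

variable {X : Type*} [MetricSpace X]

lemma lipPlus_id [Nontrivial X] : LipPlus (id : X → X) = 1 := by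
  have h : {r : ℝ | ∃ x y : X, x ≠ y ∧ r = dist (id x) (id y) / dist x y} = {1} := by
    ext r
    simp only [id_eq, Set.mem_setOf_eq, Set.mem_singleton_iff]
    constructor
    · rintro ⟨x, y, hxy, rfl⟩
      exact div_self (dist_pos.2 hxy).ne'
    · rintro rfl
      obtain ⟨x, y, hxy⟩ := exists_pair_ne X
      exact ⟨x, y, hxy, (div_self (dist_pos.2 hxy).ne').symm⟩
  rw [LipPlus, h, csSup_singleton]

variable {N : ℕ} {S : Fin N → X → X} (hS : ∀ i, IsBiLipContraction (S i))
include hS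

lemma prodL_le_pow {q : ℝ} (hq : ∀ i, LipPlus (S i) ≤ q) (hq0 : 0 ≤ q) (l : List (Fin N)) :
    (l.map fun i => LipPlus (S i)).prod ≤ q ^ l.length := by
  induction l with
  | nil => simp
  | cons i l ih =>
    simp only [List.map_cons, List.prod_cons, List.length_cons, pow_succ']
    exact mul_le_mul (hq i) ih (prodL_nonneg hS l) hq0

end AuxLip2


private def pairEquiv (N m n : ℕ) :
    ((Fin m → Fin N) × (Fin n → Fin N)) ≃ (Fin (m + n) → Fin N) :=
  (Equiv.sumArrowEquivProdArrow _ _ _).symm.trans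
    (Equiv.arrowCongr finSumFinEquiv (Equiv.refl _))

private lemma ofFn_pairEquiv (N m n : ℕ) (u : Fin m → Fin N) (v : Fin n → Fin N) :
    List.ofFn (pairEquiv N m n (u, v)) = List.ofFn u ++ List.ofFn v := by
  rw [List.ofFn_add]
  congr 1
  · congr 1
    funext i
    show Sum.elim u v (finSumFinEquiv.symm (Fin.castAdd n i)) = u i
    rw [finSumFinEquiv_symm_apply_castAdd]
    rfl
  · congr 1
    funext j
    show Sum.elim u v (finSumFinEquiv.symm (Fin.natAdd m j)) = v j
    rw [finSumFinEquiv_symm_apply_natAdd]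
    rfl

/-- **Theorem 2.4 (i).** If `d = dim_H F_C > s` and `0 < ℋ^d(C) < ∞`, then
`0 < ℋ^d(F_C) < ∞`. -/
theorem hausdorff_measure_inhomogeneous_attractor_above_lip_dim
    {X : Type*} [MetricSpace X] [CompactSpace X] [MeasurableSpace X] [BorelSpace X]
    {N : ℕ} (S : Fin N → X → X) (hS : ∀ i, IsBiLipContraction (S i))
    (C : Set X) (hCc : IsCompact C)
    (FC : Set X) (hFCc : IsCompact FC) (hFCne : FC.Nonempty)
    (hFC : FC = (⋃ i, S i '' FC) ∪ C)
    (sk : ℕ → ℝ)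
    (hsk : ∀ k, 1 ≤ k → ∑ w : Fin k → Fin N, LipPlus (compList S (List.ofFn w)) ^ sk k = 1)
    (s : ℝ) (hs : Filter.Tendsto sk Filter.atTop (𝓝 s))
    (d : ℝ) (hd0 : 0 ≤ d) (hd : dimH FC = ENNReal.ofReal d)
    (hC0 : 0 < μH[d] C) (hC1 : μH[d] C < ⊤)
    (hds : s < d) :
    0 < μH[d] FC ∧ μH[d] FC < ⊤ := by
  -- trivial case N = 0 is contradictory
  rcases Nat.eq_zero_or_pos N with hN | hN
  · subst hN
    have h1 := hsk 1 le_rfl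
    simp at h1
  haveI hne : Nonempty (Fin N) := ⟨⟨0, hN⟩⟩
  -- X is nontrivial
  haveI : Nontrivial X := by
    by_contra h
    rw [not_nontrivial_iff_subsingleton] at h
    have h0 := (hS ⟨0, hN⟩).2.2.1
    have hset : {r : ℝ | ∃ x y : X, x ≠ y ∧
        r = dist (S ⟨0, hN⟩ x) (S ⟨0, hN⟩ y) / dist x y} = ∅ := by
      ext r
      simp only [Set.mem_setOf_eq, Set.mem_empty_iff_false, iff_false, not_exists]
      intro x y hxy
      exact absurd (Subsingleton.elim x y) hxy.1
    rw [LipMinus, hset, Real.sInf_empty] at h0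
    exact lt_irrefl 0 h0
  -- choose k with sk k < d
  obtain ⟨k, hkd, hk1⟩ : ∃ k, sk k < d ∧ 1 ≤ k :=
    ((hs.eventually_lt_const hds).and (eventually_ge_atTop 1)).exists
  haveI : NeZero k := ⟨by omega⟩
  set c : List (Fin N) → ℝ := fun l => LipPlus (compList S l) with hc
  have hcpos : ∀ l, 0 < c l := fun l => lipPlus_compList_pos hS l
  have hclt : ∀ {m : ℕ} (w : Fin m → Fin N), 1 ≤ m → c (List.ofFn w) < 1 := by
    intro m w hm
    apply lipPlus_compList_lt_one hS
    intro h
    have := congrArg List.length h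
    simp at this
    omega
  -- ENNReal sums over words of given length
  set A : ℕ → ℝ≥0∞ := fun m => ∑ w : Fin m → Fin N, ENNReal.ofReal (c (List.ofFn w)) ^ d
    with hA
  have hAne : ∀ m, A m ≠ ⊤ := by
    intro m
    refine (ENNReal.sum_lt_top.2 fun w _ => ?_).ne
    exact (ENNReal.rpow_ne_top_of_nonneg hd0 ENNReal.ofReal_ne_top).lt_top
  have hA0 : A 0 = 1 := by
    have : (c ([] : List (Fin N))) = 1 := lipPlus_id
    simp [hA, Finset.card_univ, this]
  -- submultiplicativity
  have hAsub : ∀ m n : ℕ, A (m + n) ≤ A m * A n := by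
    intro m n
    set e := pairEquiv N m n with he
    have hofn : ∀ (u : Fin m → Fin N) (v : Fin n → Fin N),
        List.ofFn (e (u, v)) = List.ofFn u ++ List.ofFn v := ofFn_pairEquiv N m n
    have hsum : A (m + n) = ∑ p : (Fin m → Fin N) × (Fin n → Fin N),
        ENNReal.ofReal (c (List.ofFn (e p))) ^ d :=
      (Equiv.sum_comp e fun w => ENNReal.ofReal (c (List.ofFn w)) ^ d).symm
    rw [hsum]
    have hterm : ∀ p : (Fin m → Fin N) × (Fin n → Fin N),
        ENNReal.ofReal (c (List.ofFn (e p))) ^ d ≤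
          ENNReal.ofReal (c (List.ofFn p.1)) ^ d * ENNReal.ofReal (c (List.ofFn p.2)) ^ d := by
      rintro ⟨u, v⟩
      rw [← ENNReal.mul_rpow_of_nonneg _ _ hd0, ← ENNReal.ofReal_mul (hcpos _).le]
      apply ENNReal.rpow_le_rpow _ hd0
      apply ENNReal.ofReal_le_ofReal
      rw [hofn u v]
      exact lipPlus_compList_append hS _ _
    calc (∑ p : (Fin m → Fin N) × (Fin n → Fin N),
          ENNReal.ofReal (c (List.ofFn (e p))) ^ d)
        ≤ ∑ p : (Fin m → Fin N) × (Fin n → Fin N),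
            ENNReal.ofReal (c (List.ofFn p.1)) ^ d * ENNReal.ofReal (c (List.ofFn p.2)) ^ d :=
          Finset.sum_le_sum fun p _ => hterm p
      _ = A m * A n := by
          rw [Fintype.sum_prod_type, hA]
          simp_rw [← Finset.mul_sum]
          rw [← Finset.sum_mul]
  -- A k < 1
  have hAk : A k < 1 := by
    have hreal : ∑ w : Fin k → Fin N, c (List.ofFn w) ^ d < 1 := by
      conv_rhs => rw [← hsk k hk1]
      exact Finset.sum_lt_sum_of_nonempty Finset.univ_nonempty fun w _ =>
        Real.rpow_lt_rpow_of_exponent_gt (hcpos _) (hclt w hk1) hkd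
    have : A k = ENNReal.ofReal (∑ w : Fin k → Fin N, c (List.ofFn w) ^ d) := by
      rw [ENNReal.ofReal_sum_of_nonneg fun w _ => Real.rpow_nonneg (hcpos _).le _, hA]
      exact Finset.sum_congr rfl fun w _ => ENNReal.ofReal_rpow_of_pos (hcpos _)
    rw [this]
    exact ENNReal.ofReal_lt_one.2 hreal
  -- geometric decay
  have hgeo : ∀ p r : ℕ, A (p * k + r) ≤ A k ^ p * A r := by
    intro p r
    induction p with
    | zero => simp
    | succ p ih =>
      have hh : (p + 1) * k + r = k + (p * k + r) := by ring
      rw [hh]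
      calc A (k + (p * k + r)) ≤ A k * A (p * k + r) := hAsub k _
        _ ≤ A k * (A k ^ p * A r) := mul_le_mul_right ih _
        _ = A k ^ (p + 1) * A r := by ring
  -- total sum over all words is finite
  have hsumlist : ∑' l : List (Fin N), ENNReal.ofReal (c l) ^ d < ⊤ := by
    have h1 : ∑' l : List (Fin N), ENNReal.ofReal (c l) ^ d = ∑' n : ℕ, A n := by
      rw [← (List.equivSigmaTuple (α := Fin N)).symm.tsum_eq
        (fun l => ENNReal.ofReal (c l) ^ d)]
      rw [ENNReal.tsum_sigma' (fun p => ENNReal.ofReal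
        (c (List.equivSigmaTuple.symm p)) ^ d)]
      congr 1
      funext n
      rw [tsum_fintype]
      rfl
    have h2 : ∑' n : ℕ, A n = ∑' p : ℕ × Fin k, A (p.1 * k + p.2) := by
      rw [← ((Nat.divModEquiv k).symm).tsum_eq A]
      rfl
    rw [h1, h2]
    calc ∑' p : ℕ × Fin k, A (p.1 * k + ↑p.2)
        ≤ ∑' p : ℕ × Fin k, A k ^ p.1 * A ↑p.2 := ENNReal.tsum_le_tsum fun p => hgeo p.1 p.2
      _ = (∑' p : ℕ, A k ^ p) * ∑ r : Fin k, A ↑r := by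
          rw [ENNReal.tsum_prod']
          simp_rw [ENNReal.tsum_mul_left, tsum_fintype]
          rw [ENNReal.tsum_mul_right]
      _ < ⊤ := by
          apply ENNReal.mul_lt_top
          · rw [ENNReal.tsum_geometric]
            exact ENNReal.inv_lt_top.2 (tsub_pos_of_lt hAk)
          · exact ENNReal.sum_lt_top.2 fun r _ => (hAne r).lt_top
  -- the countable part E
  set E : Set X := ⋃ l : List (Fin N), compList S l '' C with hE
  have hmuE : μH[d] E < ⊤ := by
    have himg : ∀ l : List (Fin N),
        μH[d] (compList S l '' C) ≤ ENNReal.ofReal (c l) ^ d * μH[d] C := fun l =>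
      (compList_lipschitzWith hS l).hausdorffMeasure_image_le hd0 C
    calc μH[d] E ≤ ∑' l : List (Fin N), μH[d] (compList S l '' C) := measure_iUnion_le _
      _ ≤ ∑' l : List (Fin N), ENNReal.ofReal (c l) ^ d * μH[d] C :=
          ENNReal.tsum_le_tsum himg
      _ = (∑' l : List (Fin N), ENNReal.ofReal (c l) ^ d) * μH[d] C := ENNReal.tsum_mul_right
      _ < ⊤ := ENNReal.mul_lt_top hsumlist hC1
  -- the residual part T
  set T : Set X := ⋂ n : ℕ, ⋃ w : Fin n → Fin N, compList S (List.ofFn w) '' FC with hT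
  obtain ⟨q, hq, hq0, hq1⟩ : ∃ q : ℝ, (∀ i, LipPlus (S i) ≤ q) ∧ 0 ≤ q ∧ q < 1 := by
    refine ⟨Finset.univ.sup' Finset.univ_nonempty fun i => LipPlus (S i),
      fun i => Finset.le_sup' (fun i => LipPlus (S i)) (Finset.mem_univ i), ?_, ?_⟩
    · exact (lipPlus_S_nonneg hS ⟨0, hN⟩).trans
        (Finset.le_sup' (fun i => LipPlus (S i)) (Finset.mem_univ _))
    · exact (Finset.sup'_lt_iff _).2 fun i _ => (hS i).2.2.2.2
  have hcq : ∀ {m : ℕ} (w : Fin m → Fin N), c (List.ofFn w) ≤ q ^ m := by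
    intro m w
    refine (lipPlus_compList_le_prod hS _).trans ?_
    have := prodL_le_pow hS hq hq0 (List.ofFn w)
    simpa using this
  have hD : EMetric.diam FC ≠ ⊤ := hFCc.isBounded.ediam_ne_top
  have hdiam : ∀ {m : ℕ} (w : Fin m → Fin N),
      EMetric.diam (compList S (List.ofFn w) '' FC) ≤
        ENNReal.ofReal (c (List.ofFn w)) * EMetric.diam FC := fun w =>
    (compList_lipschitzWith hS _).ediam_image_le FC
  have hmuT : μH[d] T = 0 := by
    have hr : Tendsto (fun n : ℕ => ENNReal.ofReal q ^ (k * n) * EMetric.diam FC)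
        atTop (𝓝 0) := by
      have h1 : Tendsto (fun n : ℕ => ENNReal.ofReal q ^ (k * n)) atTop (𝓝 0) := by
        simp_rw [pow_mul]
        refine ENNReal.tendsto_pow_atTop_nhds_zero_of_lt_one ?_
        exact pow_lt_one₀ zero_le (ENNReal.ofReal_lt_one.2 hq1) (by omega)
      simpa using ENNReal.Tendsto.mul_const h1 (Or.inr hD)
    have ht : ∀ (n : ℕ) (w : Fin (k * n) → Fin N),
        EMetric.diam (compList S (List.ofFn w) '' FC) ≤
          ENNReal.ofReal q ^ (k * n) * EMetric.diam FC := by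
      intro n w
      refine (hdiam w).trans (mul_le_mul_left ?_ _)
      rw [← ENNReal.ofReal_pow hq0]
      exact ENNReal.ofReal_le_ofReal (hcq w)
    have key := MeasureTheory.Measure.hausdorffMeasure_le_liminf_sum d T
      (fun n : ℕ => ENNReal.ofReal q ^ (k * n) * EMetric.diam FC) hr
      (fun n (w : Fin (k * n) → Fin N) => compList S (List.ofFn w) '' FC)
      (Filter.Eventually.of_forall ht)
      (Filter.Eventually.of_forall fun n => Set.iInter_subset _ (k * n))
    have hbound : ∀ n : ℕ,
        (∑ w : Fin (k * n) → Fin N, EMetric.diam (compList S (List.ofFn w) '' FC) ^ d) ≤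
          A k ^ n * (EMetric.diam FC ^ d) := by
      intro n
      have h1 : (∑ w : Fin (k * n) → Fin N,
          EMetric.diam (compList S (List.ofFn w) '' FC) ^ d) ≤
            A (k * n) * EMetric.diam FC ^ d := by
        rw [hA, Finset.sum_mul]
        refine Finset.sum_le_sum fun w _ => ?_
        calc EMetric.diam (compList S (List.ofFn w) '' FC) ^ d
            ≤ (ENNReal.ofReal (c (List.ofFn w)) * EMetric.diam FC) ^ d :=
              ENNReal.rpow_le_rpow (hdiam w) hd0
          _ = ENNReal.ofReal (c (List.ofFn w)) ^ d * EMetric.diam FC ^ d :=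
              ENNReal.mul_rpow_of_nonneg _ _ hd0
      refine h1.trans (mul_le_mul_left ?_ _)
      have h2 : A (k * n) ≤ A k ^ n * A 0 := by
        have : k * n = n * k + 0 := by ring
        rw [this]
        exact hgeo n 0
      rwa [hA0, mul_one] at h2
    have hlim : Tendsto (fun n : ℕ => A k ^ n * EMetric.diam FC ^ d) atTop (𝓝 0) := by
      have h1 := ENNReal.tendsto_pow_atTop_nhds_zero_of_lt_one hAk
      simpa using ENNReal.Tendsto.mul_const h1
        (Or.inr (ENNReal.rpow_ne_top_of_nonneg hd0 hD))
    refine le_antisymm ?_ zero_le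
    refine key.trans ?_
    calc liminf (fun n : ℕ => ∑ w : Fin (k * n) → Fin N,
          EMetric.diam (compList S (List.ofFn w) '' FC) ^ d) atTop
        ≤ liminf (fun n : ℕ => A k ^ n * EMetric.diam FC ^ d) atTop :=
          Filter.liminf_le_liminf (Filter.Eventually.of_forall hbound)
      _ = 0 := hlim.liminf_eq
  -- the covering FC ⊆ E ∪ T
  have hcover : FC ⊆ E ∪ T := by
    intro x hx
    by_cases hxE : x ∈ E
    · exact Or.inl hxE
    · refine Or.inr (Set.mem_iInter.2 fun n => ?_)
      induction n with
      | zero =>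
        refine Set.mem_iUnion.2 ⟨fun i => i.elim0, ⟨x, hx, ?_⟩⟩
        simp [List.ofFn_zero, compList]
      | succ n ih =>
        obtain ⟨w, y, hy, hxy⟩ := Set.mem_iUnion.1 ih
        have hy2 : y ∈ (⋃ i, S i '' FC) ∪ C := hFC ▸ hy
        rcases hy2 with hyU | hyC
        · obtain ⟨i, z, hz, hzy⟩ : ∃ i z, z ∈ FC ∧ S i z = y := by
            simpa using hyU
          refine Set.mem_iUnion.2 ⟨Fin.snoc w i, ⟨z, hz, ?_⟩⟩
          have hofn : List.ofFn (Fin.snoc w i : Fin (n + 1) → Fin N) =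
              List.ofFn w ++ [i] := by
            rw [List.ofFn_succ']
            simp [Fin.snoc_castSucc, Fin.snoc_last, List.concat_eq_append]
          rw [hofn, compList_append]
          show compList S (List.ofFn w) (compList S [i] z) = x
          have : compList S [i] z = S i z := rfl
          rw [this, hzy]
          exact hxy
        · refine absurd ?_ hxE
          rw [hE]
          exact Set.mem_iUnion.2 ⟨List.ofFn w, ⟨y, hyC, hxy⟩⟩
  constructor
  · exact hC0.trans_le (measure_mono (by rw [hFC]; exact Set.subset_union_right))
  · calc μH[d] FC ≤ μH[d] (E ∪ T) := measure_mono hcover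
      _ ≤ μH[d] E + μH[d] T := measure_union_le E T
      _ = μH[d] E := by rw [hmuT, add_zero]
      _ < ⊤ := hmuE
end

section
/- Let (X,d) be a compact metric space, 𝕀 = {S_1,...,S_N} an IFS consisting of contracting similarities on X with compact condensation set C and similarity dimension s, and let d = dim_H F_C. If 𝕀 satisfies the COSC and 0 < ℋ^d(C) < ∞, then: if d ≤ s then ℋ^d(F_C) = ∞, and otherwise ℋ^d(F_C) = ℋ^d(C) / (1 − ∑_{i=1}^N Lip(S_i)^d). -/
open Metric Filter Set MeasureTheory Topology

/-- The condensation open set condition. -/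
def COSC {X : Type*} [MetricSpace X] {N : ℕ} (S : Fin N → X → X) (C : Set X) : Prop :=
  ∃ U : Set X, IsOpen U ∧ C ⊆ U \ (⋃ i, closure (S i '' U)) ∧
    (∀ i, S i '' U ⊆ U) ∧ ∀ i j, i ≠ j → Disjoint (S i '' U) (S j '' U)


open scoped ENNReal NNReal

lemma simil_lipschitz {X : Type*} [MetricSpace X] {S : X → X} {c : ℝ} (hc : 0 < c)
    (hsim : ∀ x y, dist (S x) (S y) = c * dist x y) :
    LipschitzWith c.toNNReal S :=
  LipschitzWith.of_dist_le_mul fun x y => by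
    rw [hsim, Real.coe_toNNReal _ hc.le]

lemma simil_hausdorff {X : Type*} [MetricSpace X] [MeasurableSpace X] [BorelSpace X] [Nonempty X]
    {S : X → X} {c : ℝ} (hc : 0 < c)
    (hsim : ∀ x y, dist (S x) (S y) = c * dist x y) {d : ℝ} (hd : 0 ≤ d) (A : Set X) :
    μH[d] (S '' A) = ENNReal.ofReal (c ^ d) * μH[d] A := by
  have hinj : Function.Injective S := fun x y hxy => by
    have := hsim x y
    rw [hxy, dist_self] at this
    have := (mul_eq_zero.mp this.symm).resolve_left (ne_of_gt hc)
    exact dist_eq_zero.mp this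
  have hle : μH[d] (S '' A) ≤ ENNReal.ofReal (c ^ d) * μH[d] A := by
    have := (simil_lipschitz hc hsim).hausdorffMeasure_image_le hd A
    have e1 : ((c.toNNReal : ℝ≥0∞)) = ENNReal.ofReal c := rfl
    rwa [e1, ENNReal.ofReal_rpow_of_pos hc] at this
  have hge : ENNReal.ofReal (c ^ d) * μH[d] A ≤ μH[d] (S '' A) := by
    set g := Function.invFun S with hg
    have hgS : ∀ x, g (S x) = x := Function.leftInverse_invFun hinj
    have hglip : LipschitzOnWith (c⁻¹).toNNReal g (S '' A) := by
      apply LipschitzOnWith.of_dist_le_mul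
      rintro _ ⟨x, -, rfl⟩ _ ⟨y, -, rfl⟩
      rw [hgS, hgS, Real.coe_toNNReal _ (inv_nonneg.mpr hc.le), hsim]
      rw [← mul_assoc, inv_mul_cancel₀ (ne_of_gt hc), one_mul]
    have him : g '' (S '' A) = A := by
      rw [← Set.image_comp]
      have : g ∘ S = id := funext hgS
      rw [this, Set.image_id]
    have h2 := hglip.hausdorffMeasure_image_le hd
    have e2 : (((c⁻¹).toNNReal : ℝ≥0∞)) = ENNReal.ofReal c⁻¹ := rfl
    rw [him, e2, ENNReal.ofReal_rpow_of_pos (inv_pos.mpr hc)] at h2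
    calc ENNReal.ofReal (c ^ d) * μH[d] A
        ≤ ENNReal.ofReal (c ^ d) * (ENNReal.ofReal (c⁻¹ ^ d) * μH[d] (S '' A)) := by
          exact mul_le_mul_right h2 _
      _ = (ENNReal.ofReal (c ^ d) * ENNReal.ofReal (c⁻¹ ^ d)) * μH[d] (S '' A) := by ring
      _ = μH[d] (S '' A) := by
          rw [← ENNReal.ofReal_mul (Real.rpow_nonneg hc.le d), ← Real.mul_rpow hc.le
            (inv_nonneg.mpr hc.le), mul_inv_cancel₀ (ne_of_gt hc), Real.one_rpow,
            ENNReal.ofReal_one, one_mul]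
  exact le_antisymm hle hge

def condL {X : Type*} {N : ℕ} (S : Fin N → X → X) (C : Set X) : ℕ → Set X
  | 0 => ∅
  | k + 1 => C ∪ ⋃ i, S i '' condL S C k

def iterG {X : Type*} {N : ℕ} (S : Fin N → X → X) (F : Set X) : ℕ → Set X
  | 0 => F
  | k + 1 => ⋃ i, S i '' iterG S F k

lemma compList_lipschitz {X : Type*} [MetricSpace X] {N : ℕ} {S : Fin N → X → X} {r : Fin N → ℝ}
    (hlip : ∀ i, LipschitzWith (r i).toNNReal (S i)) :
    ∀ w : List (Fin N), LipschitzWith ((w.map (fun i => (r i).toNNReal)).prod) (compList S w)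
  | [] => by simpa [compList] using LipschitzWith.id
  | i :: w => by
    have := (hlip i).comp (compList_lipschitz hlip w)
    simpa [compList, mul_comm] using this

lemma iterG_subset_cover {X : Type*} {N : ℕ} (S : Fin N → X → X) (F : Set X) :
    ∀ k, iterG S F k ⊆ ⋃ f : Fin k → Fin N, compList S (List.ofFn f) '' F
  | 0 => by
    intro x hx
    exact mem_iUnion.mpr ⟨Fin.elim0, by simpa [compList, iterG] using hx⟩
  | k + 1 => by
    intro x hx
    rcases mem_iUnion.mp hx with ⟨i, y, hy, rfl⟩
    rcases mem_iUnion.mp (iterG_subset_cover S F k hy) with ⟨f, z, hz, rfl⟩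
    refine mem_iUnion.mpr ⟨Fin.cons i f, z, hz, ?_⟩
    have : List.ofFn (Fin.cons i f) = i :: List.ofFn f := by
      rw [List.ofFn_succ]; simp [Fin.cons]
    rw [this]; rfl


/-- **Corollary 2.5.** For an inhomogeneous self-similar set with similarity dimension `s`,
COSC and `0 < ℋ^d(C) < ∞` where `d = dim_H F_C`: if `d ≤ s` then `ℋ^d(F_C) = ∞`, and
otherwise `ℋ^d(F_C) = ℋ^d(C) / (1 - ∑ᵢ Lip(Sᵢ)^d)`. -/
theorem hausdorff_measure_inhomogeneous_self_similar
    {X : Type*} [MetricSpace X] [CompactSpace X] [MeasurableSpace X] [BorelSpace X]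
    {N : ℕ} (S : Fin N → X → X)
    (r : Fin N → ℝ) (hr : ∀ i, 0 < r i ∧ r i < 1)
    (hsim : ∀ i, ∀ x y : X, dist (S i x) (S i y) = r i * dist x y)
    (C : Set X) (hCc : IsCompact C)
    (FC : Set X) (hFCc : IsCompact FC) (hFCne : FC.Nonempty)
    (hFC : FC = (⋃ i, S i '' FC) ∪ C)
    (s : ℝ) (hsdim : ∑ i, r i ^ s = 1)
    (d : ℝ) (hd0 : 0 ≤ d) (hd : dimH FC = ENNReal.ofReal d)
    (hcosc : COSC S C)
    (hC0 : 0 < μH[d] C) (hC1 : μH[d] C < ⊤) :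
    (d ≤ s → μH[d] FC = ⊤) ∧
    (s < d → μH[d] FC = μH[d] C / ENNReal.ofReal (1 - ∑ i, r i ^ d)) := by
  classical
  haveI : Nonempty X := ⟨hFCne.some⟩
  obtain ⟨U, hUo, hCU, hSU, hUdisj⟩ := hcosc
  have hrpos : ∀ i, 0 < r i := fun i => (hr i).1
  have hrlt : ∀ i, r i < 1 := fun i => (hr i).2
  -- N is positive
  have hN : 0 < N := by
    rcases Nat.eq_zero_or_pos N with h | h
    · subst h; simp at hsdim
    · exact h
  haveI hNe : Nonempty (Fin N) := Fin.pos_iff_nonempty.mp hN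
  -- s is nonnegative
  have hs0 : 0 ≤ s := by
    by_contra hneg
    push_neg at hneg
    have h1 : ∀ i : Fin N, (1 : ℝ) < r i ^ s := fun i =>
      Real.one_lt_rpow_iff_of_pos (hrpos i) |>.mpr (Or.inr ⟨hrlt i, hneg⟩)
    have : (N : ℝ) < ∑ i, r i ^ s := by
      calc (N : ℝ) = ∑ _i : Fin N, (1 : ℝ) := by simp
        _ < ∑ i, r i ^ s := Finset.sum_lt_sum_of_nonempty Finset.univ_nonempty fun i _ => h1 i
    rw [hsdim] at this
    have h2 : (1 : ℝ) ≤ (N : ℝ) := by exact_mod_cast hN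
    linarith
  -- basic facts
  have hScont : ∀ i, Continuous (S i) := fun i => (simil_lipschitz (hrpos i) (hsim i)).continuous
  have hCsubU : C ⊆ U := fun x hx => (hCU hx).1
  have hCsubFC : C ⊆ FC := by rw [hFC]; exact subset_union_right
  have hSFC : ∀ i, S i '' FC ⊆ FC := by
    intro i
    rw [hFC]
    exact subset_union_left.trans' (subset_iUnion_of_subset i (by rw [← hFC]))
  set c := μH[d] C with hc
  set ρ : ℝ := ∑ i, r i ^ d with hρ
  have hρ0 : 0 ≤ ρ := Finset.sum_nonneg fun i _ => (Real.rpow_pos_of_pos (hrpos i) d).le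
  have hρE : ∑ i, ENNReal.ofReal (r i ^ d) = ENNReal.ofReal ρ :=
    (ENNReal.ofReal_sum_of_nonneg fun i _ => (Real.rpow_pos_of_pos (hrpos i) d).le).symm
  have hscale : ∀ i (A : Set X), μH[d] (S i '' A) = ENNReal.ofReal (r i ^ d) * μH[d] A :=
    fun i A => simil_hausdorff (hrpos i) (hsim i) hd0 A
  -- facts about L
  set L := condL S C with hL
  have hLU : ∀ k, L k ⊆ U := by
    intro k
    induction k with
    | zero => simp [hL, condL]
    | succ k ih =>
      show C ∪ ⋃ i, S i '' L k ⊆ U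
      refine union_subset hCsubU (iUnion_subset fun i => ?_)
      exact (image_mono (f := S i) ih).trans (hSU i)
  have hLFC : ∀ k, L k ⊆ FC := by
    intro k
    induction k with
    | zero => simp [hL, condL]
    | succ k ih =>
      show C ∪ ⋃ i, S i '' L k ⊆ FC
      refine union_subset hCsubFC (iUnion_subset fun i => ?_)
      exact (image_mono (f := S i) ih).trans (hSFC i)
  have hLcomp : ∀ k, IsCompact (L k) := by
    intro k
    induction k with
    | zero => simpa [hL, condL] using isCompact_empty
    | succ k ih =>
      exact hCc.union (isCompact_iUnion fun i => ih.image (hScont i))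
  have hLmono : Monotone L := by
    refine monotone_nat_of_le_succ ?_
    intro k
    induction k with
    | zero => simp [hL, condL]
    | succ k ih =>
      show C ∪ ⋃ i, S i '' L k ⊆ C ∪ ⋃ i, S i '' L (k + 1)
      exact union_subset_union_right _
        (iUnion_mono fun i => image_mono ih)
  -- measure of L k
  have hLmeas : ∀ k, μH[d] (L k) = c * ∑ j ∈ Finset.range k, (ENNReal.ofReal ρ) ^ j := by
    intro k
    induction k with
    | zero => simp [hL, condL]
    | succ k ih =>
      have hdisjC : Disjoint C (⋃ i, S i '' L k) := by
        refine Set.disjoint_left.mpr fun x hxC hxU => ?_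
        rcases mem_iUnion.mp hxU with ⟨i, hxi⟩
        exact (hCU hxC).2 (mem_iUnion.mpr ⟨i, subset_closure (image_mono (f := S i) (hLU k) hxi)⟩)
      have hmeasi : ∀ i, MeasurableSet (S i '' L k) :=
        fun i => ((hLcomp k).image (hScont i)).measurableSet
      have hpair : Pairwise (Function.onFun Disjoint fun i => S i '' L k) := by
        intro i j hij
        exact (hUdisj i j hij).mono (image_mono (hLU k)) (image_mono (hLU k))
      have e1 : μH[d] (L (k + 1)) = c + ∑ i, μH[d] (S i '' L k) := by
        show μH[d] (C ∪ ⋃ i, S i '' L k) = _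
        rw [measure_union hdisjC (MeasurableSet.iUnion hmeasi), measure_iUnion hpair hmeasi,
          tsum_fintype]
      rw [e1]
      simp_rw [hscale _ (L k), ih]
      rw [← Finset.sum_mul, hρE]
      rw [Finset.sum_range_succ']
      simp only [pow_zero, pow_succ]
      rw [← Finset.sum_mul]
      ring
  -- lower bound
  have hlow : c * (1 - ENNReal.ofReal ρ)⁻¹ ≤ μH[d] FC := by
    rw [← ENNReal.tsum_geometric, ENNReal.tsum_eq_iSup_nat, ENNReal.mul_iSup]
    refine iSup_le fun k => ?_
    rw [← hLmeas k]
    exact measure_mono (hLFC k)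
  constructor
  · -- case d ≤ s
    intro hds
    have hρ1 : (1 : ℝ) ≤ ρ := by
      rw [← hsdim]
      exact Finset.sum_le_sum fun i _ =>
        Real.rpow_le_rpow_of_exponent_ge (hrpos i) (hrlt i).le hds
    have h1 : (1 : ℝ≥0∞) - ENNReal.ofReal ρ = 0 :=
      tsub_eq_zero_of_le (by rwa [ENNReal.one_le_ofReal])
    rw [h1, ENNReal.inv_zero, ENNReal.mul_top hC0.ne'] at hlow
    exact top_le_iff.mp hlow
  · -- case s < d
    intro hsd
    have hdpos : 0 < d := hs0.trans_lt hsd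
    have hρlt1 : ρ < 1 := by
      rw [← hsdim]
      exact Finset.sum_lt_sum_of_nonempty Finset.univ_nonempty fun i _ =>
        Real.rpow_lt_rpow_of_exponent_gt (hrpos i) (hrlt i) hsd
    have hEρ : ENNReal.ofReal ρ < 1 := ENNReal.ofReal_lt_one.mpr hρlt1
    -- the iterated images
    set G := iterG S FC with hG
    have hGsub : ∀ k, FC ⊆ G k ∪ L k := by
      intro k
      induction k with
      | zero => exact fun x hx => Or.inl hx
      | succ k ih =>
        intro x hx
        rw [hFC] at hx
        rcases hx with hx | hx
        · rcases mem_iUnion.mp hx with ⟨i, y, hy, rfl⟩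
          rcases ih hy with hy' | hy'
          · exact Or.inl (mem_iUnion.mpr ⟨i, mem_image_of_mem _ hy'⟩)
          · exact Or.inr (Or.inr (mem_iUnion.mpr ⟨i, mem_image_of_mem _ hy'⟩))
        · exact Or.inr (Or.inl hx)
    have hcover : FC ⊆ (⋂ k, G k) ∪ ⋃ k, L k := by
      intro x hx
      by_cases hxL : x ∈ ⋃ k, L k
      · exact Or.inr hxL
      · refine Or.inl (mem_iInter.mpr fun k => ?_)
        rcases hGsub k hx with h | h
        · exact h
        · exact absurd (mem_iUnion.mpr ⟨k, h⟩) hxL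
    -- the core has measure zero
    have hD : EMetric.diam FC ≠ ⊤ := by
      rw [show EMetric.diam FC = Metric.ediam FC from rfl, ← Metric.isBounded_iff_ediam_ne_top]
      exact hFCc.isBounded
    set m0 : ℝ≥0 := Finset.univ.sup fun i => (r i).toNNReal with hm0
    have hm0lt : m0 < 1 := by
      rw [hm0]
      refine Finset.sup_lt_iff (by norm_num) |>.mpr fun i _ => ?_
      rw [← Real.toNNReal_one]
      exact (Real.toNNReal_lt_toNNReal_iff one_pos).mpr (hrlt i)
    have hA0 : μH[d] (⋂ k, G k) = 0 := by
      have hrb : Tendsto (fun n : ℕ => (m0 : ℝ≥0∞) ^ n * EMetric.diam FC) atTop (𝓝 0) := by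
        have h1 : Tendsto (fun n : ℕ => (m0 : ℝ≥0∞) ^ n) atTop (𝓝 0) :=
          ENNReal.tendsto_pow_atTop_nhds_zero_of_lt_one (by exact_mod_cast hm0lt)
        simpa using ENNReal.Tendsto.mul_const h1 (Or.inr hD)
      have ht : ∀ (n : ℕ) (f : Fin n → Fin N),
          EMetric.diam (compList S (List.ofFn f) '' FC) ≤ (m0 : ℝ≥0∞) ^ n * EMetric.diam FC := by
        intro n f
        have hL1 := (compList_lipschitz (fun i => simil_lipschitz (hrpos i) (hsim i))
          (List.ofFn f)).ediam_image_le FC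
        refine hL1.trans (mul_le_mul_left ?_ _)
        have e1 : ((List.ofFn f).map fun i => (r i).toNNReal).prod
            = ∏ j, (r (f j)).toNNReal := by
          rw [List.map_ofFn, List.prod_ofFn]
          rfl
        rw [e1]
        have e2 : (∏ j, (r (f j)).toNNReal) ≤ m0 ^ n := by
          calc (∏ j, (r (f j)).toNNReal) ≤ ∏ _j : Fin n, m0 :=
                Finset.prod_le_prod' fun j _ => by
                  rw [hm0]
                  exact Finset.le_sup (f := fun i => (r i).toNNReal) (Finset.mem_univ (f j))
            _ = m0 ^ n := by rw [Finset.prod_const, Finset.card_univ, Fintype.card_fin]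
        exact_mod_cast e2
      have happly := Measure.hausdorffMeasure_le_liminf_sum d (⋂ k, G k)
        (fun n : ℕ => (m0 : ℝ≥0∞) ^ n * EMetric.diam FC) hrb
        (fun n (f : Fin n → Fin N) => compList S (List.ofFn f) '' FC)
        (Eventually.of_forall ht)
        (Eventually.of_forall fun n => (iInter_subset G n).trans (iterG_subset_cover S FC n))
      have hsum : ∀ n : ℕ, ∑ f : Fin n → Fin N,
          EMetric.diam (compList S (List.ofFn f) '' FC) ^ d
          ≤ (ENNReal.ofReal ρ) ^ n * EMetric.diam FC ^ d := by
        intro n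
        have hterm : ∀ f : Fin n → Fin N,
            EMetric.diam (compList S (List.ofFn f) '' FC) ^ d
            ≤ (∏ j, ENNReal.ofReal (r (f j) ^ d)) * EMetric.diam FC ^ d := by
          intro f
          have hL1 := (compList_lipschitz (fun i => simil_lipschitz (hrpos i) (hsim i))
            (List.ofFn f)).ediam_image_le FC
          have e1 : ((List.ofFn f).map fun i => (r i).toNNReal).prod
              = ∏ j, (r (f j)).toNNReal := by
            rw [List.map_ofFn, List.prod_ofFn]
            rfl
          rw [e1] at hL1
          calc EMetric.diam (compList S (List.ofFn f) '' FC) ^ d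
              ≤ (((∏ j, (r (f j)).toNNReal : ℝ≥0) : ℝ≥0∞) * EMetric.diam FC) ^ d :=
                ENNReal.rpow_le_rpow hL1 hd0
            _ = (((∏ j, (r (f j)).toNNReal : ℝ≥0) : ℝ≥0∞)) ^ d * EMetric.diam FC ^ d :=
                ENNReal.mul_rpow_of_nonneg _ _ hd0
            _ = (∏ j, ENNReal.ofReal (r (f j) ^ d)) * EMetric.diam FC ^ d := by
                congr 1
                rw [← ENNReal.coe_rpow_of_nonneg _ hd0, ← NNReal.finset_prod_rpow]
                push_cast
                refine Finset.prod_congr rfl fun j _ => ?_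
                rw [← Real.toNNReal_rpow_of_nonneg (hrpos (f j)).le]
                rfl
        calc ∑ f : Fin n → Fin N, EMetric.diam (compList S (List.ofFn f) '' FC) ^ d
            ≤ ∑ f : Fin n → Fin N, (∏ j, ENNReal.ofReal (r (f j) ^ d)) * EMetric.diam FC ^ d :=
              Finset.sum_le_sum fun f _ => hterm f
          _ = (∑ f : Fin n → Fin N, ∏ j, ENNReal.ofReal (r (f j) ^ d)) * EMetric.diam FC ^ d := by
              rw [Finset.sum_mul]
          _ = (ENNReal.ofReal ρ) ^ n * EMetric.diam FC ^ d := by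
              congr 1
              rw [← hρE, Finset.sum_pow', Fintype.piFinset_univ]
      have hlim : Tendsto (fun n : ℕ => (ENNReal.ofReal ρ) ^ n * EMetric.diam FC ^ d)
          atTop (𝓝 0) := by
        have h1 : Tendsto (fun n : ℕ => (ENNReal.ofReal ρ) ^ n) atTop (𝓝 0) :=
          ENNReal.tendsto_pow_atTop_nhds_zero_of_lt_one hEρ
        simpa using ENNReal.Tendsto.mul_const h1
          (Or.inr (ENNReal.rpow_ne_top_of_nonneg hd0 hD))
      refine le_antisymm ?_ zero_le
      calc μH[d] (⋂ k, G k)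
          ≤ liminf (fun n => ∑ f : Fin n → Fin N,
            EMetric.diam (compList S (List.ofFn f) '' FC) ^ d) atTop := happly
        _ ≤ liminf (fun n : ℕ => (ENNReal.ofReal ρ) ^ n * EMetric.diam FC ^ d) atTop :=
            liminf_le_liminf (Eventually.of_forall hsum)
        _ = 0 := hlim.liminf_eq
    -- upper bound
    have hupp : μH[d] FC ≤ c * (1 - ENNReal.ofReal ρ)⁻¹ := by
      calc μH[d] FC ≤ μH[d] ((⋂ k, G k) ∪ ⋃ k, L k) := measure_mono hcover
        _ ≤ μH[d] (⋂ k, G k) + μH[d] (⋃ k, L k) := measure_union_le _ _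
        _ = μH[d] (⋃ k, L k) := by rw [hA0, zero_add]
        _ = ⨆ k, μH[d] (L k) := hLmono.measure_iUnion
        _ ≤ c * (1 - ENNReal.ofReal ρ)⁻¹ := by
            refine iSup_le fun k => ?_
            rw [hLmeas k, ← ENNReal.tsum_geometric]
            exact mul_le_mul_right (ENNReal.sum_le_tsum _) _
    have hfinal : μH[d] FC = c * (1 - ENNReal.ofReal ρ)⁻¹ := le_antisymm hupp hlow
    rw [hfinal, ENNReal.ofReal_sub 1 hρ0, ENNReal.ofReal_one, div_eq_mul_inv]
end

section
/- Let (X,d) be a compact metric space, 𝕀 = {S_1,...,S_N} an IFS of bi-Lipschitz contractions on X with compact condensation set C, upper Lipschitz dimension s, and let t > max{s, dim̄_B C}. Then there exists K ∈ ℕ such that for all k > K one has t > s_k, and for each k the IFS 𝕀_k = {S_𝐢 : 𝐢 ∈ I^k} with condensation set C satisfies dim̄_B F_C = dim̄_B F_C^k. -/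
open Metric Filter Set MeasureTheory Topology
open scoped NNReal ENNReal

/-- `N_δ(F)`: the smallest number of sets of diameter at most `δ` needed to cover `F`. -/
noncomputable def coverNum {X : Type*} [MetricSpace X] (F : Set X) (δ : ℝ) : ℕ :=
  sInf {n : ℕ | ∃ 𝒰 : Finset (Set X), 𝒰.card = n ∧ (∀ U ∈ 𝒰, Metric.diam U ≤ δ) ∧ F ⊆ ⋃₀ ↑𝒰}

/-- Upper box dimension `dim̄_B F = limsup_{δ → 0⁺} log N_δ(F) / (-log δ)`. -/
noncomputable def ubDim {X : Type*} [MetricSpace X] (F : Set X) : ℝ :=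
  Filter.limsup (fun δ : ℝ => Real.log (coverNum F δ) / (-Real.log δ)) (nhdsWithin 0 (Set.Ioi 0))

section Aux

variable {X : Type*} [MetricSpace X] [CompactSpace X]

attribute [local instance] Classical.propDecidable

noncomputable local instance : DecidableEq (Set X) := Classical.decEq _

lemma coverSet_nonempty (F : Set X) {δ : ℝ} (hδ : 0 < δ) :
    {n : ℕ | ∃ 𝒰 : Finset (Set X), 𝒰.card = n ∧ (∀ U ∈ 𝒰, Metric.diam U ≤ δ) ∧
      F ⊆ ⋃₀ ↑𝒰}.Nonempty := by
  obtain ⟨t, -, htf, hcov⟩ := isCompact_univ.finite_cover_balls (s := (univ : Set X))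
    (show (0:ℝ) < δ/3 by linarith)
  refine ⟨_, htf.toFinset.image (fun x => Metric.ball x (δ/3)), rfl, ?_, ?_⟩
  · intro U hU
    simp only [Finset.mem_image, Set.Finite.mem_toFinset] at hU
    obtain ⟨x, -, rfl⟩ := hU
    calc Metric.diam (Metric.ball x (δ/3)) ≤ 2 * (δ/3) := Metric.diam_ball (by linarith)
      _ ≤ δ := by linarith
  · intro x hx
    have : x ∈ ⋃ y ∈ t, Metric.ball y (δ/3) := hcov (mem_univ x)
    obtain ⟨y, hy, hxy⟩ := mem_iUnion₂.mp this
    exact ⟨Metric.ball y (δ/3), by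
      simp only [Finset.coe_image, Set.Finite.coe_toFinset]
      exact mem_image_of_mem _ hy, hxy⟩

lemma coverNum_pos {F : Set X} (hF : F.Nonempty) {δ : ℝ} (hδ : 0 < δ) :
    0 < coverNum F δ := by
  rcases Nat.eq_zero_or_pos (coverNum F δ) with h | h
  swap
  · exact h
  · exfalso
    have hmem := Nat.sInf_mem (coverSet_nonempty F hδ)
    rw [show sInf _ = coverNum F δ from rfl, h] at hmem
    obtain ⟨𝒰, hcard, -, hcov⟩ := hmem
    rw [Finset.card_eq_zero] at hcard
    subst hcard
    obtain ⟨x, hx⟩ := hF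
    simpa using hcov hx

lemma coverNum_mono {F G : Set X} (h : F ⊆ G) {δ : ℝ} (hδ : 0 < δ) :
    coverNum F δ ≤ coverNum G δ := by
  obtain ⟨𝒰, hcard, hd, hcov⟩ := Nat.sInf_mem (coverSet_nonempty G hδ)
  exact Nat.sInf_le ⟨𝒰, hcard, hd, h.trans hcov⟩

lemma coverNum_union_images {ι : Type*} [Fintype ι] (φ : ι → X → X)
    (hφ : ∀ m, LipschitzWith 1 (φ m)) (F G : Set X) (hFG : F ⊆ ⋃ m, φ m '' G)
    {δ : ℝ} (hδ : 0 < δ) :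
    coverNum F δ ≤ Fintype.card ι * coverNum G δ := by
  obtain ⟨𝒰, hcard, hd, hcov⟩ := Nat.sInf_mem (coverSet_nonempty G hδ)
  set 𝒱 : Finset (Set X) := Finset.univ.biUnion
    (fun m : ι => 𝒰.image (Set.image (φ m))) with h𝒱
  have h1 : coverNum F δ ≤ 𝒱.card := by
    refine Nat.sInf_le ⟨𝒱, rfl, ?_, ?_⟩
    · intro V hV
      simp only [h𝒱, Finset.mem_biUnion, Finset.mem_image] at hV
      obtain ⟨m, -, U, hU, rfl⟩ := hV
      have hb : Bornology.IsBounded U := isCompact_univ.isBounded.subset (subset_univ U)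
      calc Metric.diam (φ m '' U) ≤ (1:ℝ≥0) * Metric.diam U := (hφ m).diam_image_le U hb
        _ = Metric.diam U := by simp
        _ ≤ δ := hd U hU
    · intro x hx
      obtain ⟨m, y, hy, rfl⟩ := mem_iUnion.mp (hFG hx)
      obtain ⟨U, hU, hyU⟩ := hcov hy
      refine ⟨φ m '' U, ?_, mem_image_of_mem _ hyU⟩
      simp only [h𝒱, Finset.coe_biUnion, Finset.mem_coe, Finset.mem_univ, mem_iUnion,
        Finset.coe_image]
      exact ⟨m, trivial, mem_image_of_mem _ hU⟩
  have h2 : 𝒱.card ≤ Fintype.card ι * coverNum G δ := by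
    calc 𝒱.card ≤ ∑ m : ι, (𝒰.image (Set.image (φ m))).card := Finset.card_biUnion_le
      _ ≤ ∑ _m : ι, 𝒰.card := Finset.sum_le_sum (fun m _ => Finset.card_image_le)
      _ = Fintype.card ι * coverNum G δ := by
        rw [Finset.sum_const, hcard, smul_eq_mul, Finset.card_univ]; rfl
  exact h1.trans h2

lemma attractor_subset {ι : Type*} (T : ι → X → X) {r : ℝ≥0} (hr : r < 1)
    (hT : ∀ m, LipschitzWith r (T m)) {A B C : Set X}
    (hA : A = (⋃ m, T m '' A) ∪ C) (hBc : IsCompact B) (hBne : B.Nonempty)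
    (hCB : C ⊆ B) (hTB : ∀ m, T m '' B ⊆ B) : A ⊆ B := by
  set e : ℝ≥0∞ := ⨆ x ∈ A, EMetric.infEdist x B with he
  have hetop : e ≠ ⊤ := by
    obtain ⟨b, hb⟩ := hBne
    have hle : e ≤ EMetric.diam (univ : Set X) := by
      refine iSup₂_le fun x _ => ?_
      exact (EMetric.infEdist_le_edist_of_mem hb).trans
        (EMetric.edist_le_diam_of_mem trivial trivial)
    intro h
    exact isCompact_univ.isBounded.ediam_ne_top (top_le_iff.mp (h ▸ hle))
  have hle : e ≤ (r : ℝ≥0∞) * e := by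
    refine iSup₂_le fun x hx => ?_
    rw [hA] at hx
    rcases hx with hx | hx
    · rw [mem_iUnion] at hx
      obtain ⟨m, y, hy, rfl⟩ := hx
      obtain ⟨b, hbB, hbe⟩ := hBc.exists_infEdist_eq_edist hBne y
      calc EMetric.infEdist (T m y) B ≤ edist (T m y) (T m b) :=
            EMetric.infEdist_le_edist_of_mem (hTB m ⟨b, hbB, rfl⟩)
        _ ≤ (r : ℝ≥0∞) * edist y b := (hT m) y b
        _ = (r : ℝ≥0∞) * EMetric.infEdist y B := by rw [← hbe]; rfl
        _ ≤ (r : ℝ≥0∞) * e := by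
            gcongr
            exact le_iSup₂ (f := fun x (_ : x ∈ A) => EMetric.infEdist x B) y hy
    · exact (EMetric.infEdist_zero_of_mem (hCB hx)).le.trans zero_le
  have he0 : e = 0 := by
    by_contra h0
    have hlt : (r : ℝ≥0∞) * e < 1 * e := by
      refine ENNReal.mul_lt_mul_left h0 hetop ?_
      exact_mod_cast hr
    rw [one_mul] at hlt
    exact lt_irrefl e (lt_of_le_of_lt hle hlt)
  intro x hx
  have h0 : EMetric.infEdist x B = 0 :=
    le_antisymm (he0 ▸ le_iSup₂ (f := fun x (_ : x ∈ A) => EMetric.infEdist x B) x hx)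
      (zero_le)
  have := EMetric.mem_closure_iff_infEdist_zero.mpr h0
  rwa [hBc.isClosed.closure_eq] at this

lemma limsup_eq_limsup_of_le_add {f g h : ℝ → ℝ} {l : Filter ℝ} [l.NeBot]
    (hg0 : ∀ᶠ δ in l, 0 ≤ g δ) (hgf : ∀ᶠ δ in l, g δ ≤ f δ)
    (hfg : ∀ᶠ δ in l, f δ ≤ g δ + h δ) (hh : Tendsto h l (𝓝 0)) :
    limsup f l = limsup g l := by
  rw [limsup_eq, limsup_eq]
  set Af := {a : ℝ | ∀ᶠ δ in l, f δ ≤ a} with hAf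
  set Ag := {a : ℝ | ∀ᶠ δ in l, g δ ≤ a} with hAg
  have hsub : Af ⊆ Ag := fun a ha => (ha.and hgf).mono (fun δ hδ => hδ.2.trans hδ.1)
  have hkey : ∀ a ∈ Ag, ∀ ε : ℝ, 0 < ε → a + ε ∈ Af := by
    intro a ha ε hε
    have hhe : ∀ᶠ δ in l, h δ ≤ ε := hh.eventually_le_const hε
    exact (ha.and (hfg.and hhe)).mono fun δ ⟨h1, h2, h3⟩ =>
      h2.trans (add_le_add h1 h3)
  by_cases hAgne : Ag.Nonempty
  · have hlb : ∀ b ∈ Ag, (0:ℝ) ≤ b := by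
      intro b hb
      obtain ⟨δ, h1, h2⟩ := ((hb.and hg0).exists)
      exact h2.trans h1
    have hbg : BddBelow Ag := ⟨0, hlb⟩
    have hbf : BddBelow Af := hbg.mono hsub
    obtain ⟨a, ha⟩ := hAgne
    have hAfne : Af.Nonempty := ⟨a + 1, hkey a ha 1 one_pos⟩
    refine le_antisymm ?_ (csInf_le_csInf hbg hAfne hsub)
    have hstep : ∀ ε : ℝ, 0 < ε → sInf Af ≤ sInf Ag + ε := by
      intro ε hε
      have : ∀ b ∈ Ag, sInf Af - ε ≤ b := by
        intro b hb
        have := csInf_le hbf (hkey b hb ε hε)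
        linarith
      have := le_csInf ⟨a, ha⟩ this
      linarith
    by_contra hcon
    push_neg at hcon
    have := hstep ((sInf Af - sInf Ag)/2) (by linarith)
    linarith
  · rw [not_nonempty_iff_eq_empty] at hAgne
    have : Af = ∅ := eq_empty_of_subset_empty (hAgne ▸ hsub)
    rw [hAgne, this]

lemma ofFn_comp_cast {α : Type*} {m n : ℕ} (h : m = n) (f : Fin m → α) :
    List.ofFn (f ∘ Fin.cast h.symm) = List.ofFn f := by
  subst h; rfl

end Aux

/-- **Corollary 3.2.** If `t > max{s, dim̄_B C}`, then there is `K ∈ ℕ` with `t > s_k` for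
all `k > K`, and for each `k` the system `𝕀_k = {S_𝐢 : 𝐢 ∈ I^k}` with condensation set `C`
satisfies `dim̄_B F_C = dim̄_B F_C^k`. -/
theorem upper_box_dim_iterated_system_eventually
    {X : Type*} [MetricSpace X] [CompactSpace X]
    {N : ℕ} (S : Fin N → X → X) (hS : ∀ i, IsBiLipContraction (S i))
    (C : Set X) (hCc : IsCompact C) (hCne : C.Nonempty)
    (FC : Set X) (hFCc : IsCompact FC) (hFCne : FC.Nonempty)
    (hFC : FC = (⋃ i, S i '' FC) ∪ C)
    (sk : ℕ → ℝ)
    (hsk : ∀ k, 1 ≤ k → ∑ w : Fin k → Fin N, LipPlus (compList S (List.ofFn w)) ^ sk k = 1)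
    (s : ℝ) (hs : Filter.Tendsto sk Filter.atTop (𝓝 s))
    (t : ℝ) (ht : max s (ubDim C) < t) :
    (∃ K : ℕ, ∀ k : ℕ, K < k → sk k < t) ∧
    (∀ k : ℕ, 1 ≤ k → ∀ FCk : Set X, IsCompact FCk → FCk.Nonempty →
      FCk = (⋃ w : Fin k → Fin N, compList S (List.ofFn w) '' FCk) ∪ C →
      ubDim FC = ubDim FCk) := by
  constructor
  · have hst : s < t := lt_of_le_of_lt (le_max_left _ _) ht
    have hev := hs.eventually_lt_const hst
    rw [eventually_atTop] at hev
    obtain ⟨K, hK⟩ := hev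
    exact ⟨K, fun k hk => hK k hk.le⟩
  · intro k hk FCk hFCkc hFCkne hFCk
    have hk0 : 0 < k := hk
    -- Lipschitz data
    have hρpos : ∀ i, 0 ≤ LipPlus (S i) :=
      fun i => le_trans (hS i).2.2.1.le (hS i).2.2.2.1
    set ρ : Fin N → ℝ≥0 := fun i => ⟨LipPlus (S i), hρpos i⟩ with hρ
    have hL : ∀ i, LipschitzWith (ρ i) (S i) := fun i =>
      LipschitzWith.of_dist_le_mul (fun x y => (hS i).1 x y)
    have hρ1 : ∀ i, ρ i < 1 := fun i => by
      rw [← NNReal.coe_lt_coe]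
      exact (hS i).2.2.2.2
    set r : ℝ≥0 := Finset.univ.sup ρ with hrdef
    have hρr : ∀ i, ρ i ≤ r := fun i => Finset.le_sup (Finset.mem_univ i)
    have hr1 : r < 1 := by
      rw [hrdef, Finset.sup_lt_iff (by norm_num : (⊥ : ℝ≥0) < 1)]
      exact fun i _ => hρ1 i
    have lip1 : ∀ l : List (Fin N), LipschitzWith 1 (compList S l) := by
      intro l
      induction l with
      | nil => exact LipschitzWith.id
      | cons i l ih =>
        exact ((hL i).comp ih).weaken (by
          calc ρ i * 1 = ρ i := mul_one _
            _ ≤ 1 := (hρ1 i).le)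
    have lipr : ∀ l : List (Fin N), l ≠ [] → LipschitzWith r (compList S l) := by
      intro l hl
      cases l with
      | nil => exact absurd rfl hl
      | cons i l =>
        exact ((hL i).comp (lip1 l)).weaken (by rw [mul_one]; exact hρr i)
    -- invariance of FC
    have hSFC : ∀ i, S i '' FC ⊆ FC := by
      intro i
      conv_rhs => rw [hFC]
      exact (subset_iUnion (fun i => S i '' FC) i).trans subset_union_left
    have hFCinv : ∀ l : List (Fin N), compList S l '' FC ⊆ FC := by
      intro l
      induction l with
      | nil => simp [compList]
      | cons i l ih =>
        rw [show compList S (i :: l) = S i ∘ compList S l from rfl, image_comp]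
        exact (image_mono ih).trans (hSFC i)
    have hCFC : C ⊆ FC := by
      conv_rhs => rw [hFC]
      exact subset_union_right
    -- words of length k
    have hofFn_ne : ∀ w : Fin k → Fin N, List.ofFn w ≠ [] := by
      intro w h
      have hlen : (List.ofFn w).length = k := List.length_ofFn
      rw [h] at hlen
      simp at hlen
      omega
    have hwk : ∀ w : Fin k → Fin N, compList S (List.ofFn w) '' FCk ⊆ FCk := by
      intro w
      conv_rhs => rw [hFCk]
      exact (subset_iUnion
        (fun w : Fin k → Fin N => compList S (List.ofFn w) '' FCk) w).trans subset_union_left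
    have hCk : C ⊆ FCk := by
      conv_rhs => rw [hFCk]
      exact subset_union_right
    -- FCk ⊆ FC
    have hsub1 : FCk ⊆ FC :=
      attractor_subset (fun w : Fin k → Fin N => compList S (List.ofFn w)) hr1
        (fun w => lipr _ (hofFn_ne w)) hFCk hFCc hFCne hCFC (fun w => hFCinv _)
    -- the set E of images of FCk by words of length < k
    set E : Set X := ⋃ (j : Fin k), ⋃ (w : Fin (j : ℕ) → Fin N),
      compList S (List.ofFn w) '' FCk with hE
    have hEc : IsCompact E :=
      isCompact_iUnion fun j => isCompact_iUnion fun w => hFCkc.image (lip1 _).continuous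
    have hFCkE : FCk ⊆ E := by
      intro x hx
      refine mem_iUnion.mpr ⟨⟨0, hk0⟩, mem_iUnion.mpr ⟨Fin.elim0, ?_⟩⟩
      simpa [compList, List.ofFn_zero] using hx
    have hEne : E.Nonempty := by
      obtain ⟨x, hx⟩ := hFCkne
      exact ⟨x, hFCkE hx⟩
    have hCE : C ⊆ E := hCk.trans hFCkE
    have hofFn_cons : ∀ (n : ℕ) (i : Fin N) (w : Fin n → Fin N),
        List.ofFn (Fin.cons i w : Fin (n + 1) → Fin N) = i :: List.ofFn w := by
      intro n i w
      rw [List.ofFn_succ]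
      simp
    have hSE : ∀ i, S i '' E ⊆ E := by
      intro i x hx
      obtain ⟨y, hy, rfl⟩ := hx
      rw [hE, mem_iUnion] at hy
      obtain ⟨j, hy⟩ := hy
      rw [mem_iUnion] at hy
      obtain ⟨w, z, hz, rfl⟩ := hy
      have hmem : S i (compList S (List.ofFn w) z) ∈
          compList S (List.ofFn (Fin.cons i w : Fin ((j : ℕ) + 1) → Fin N)) '' FCk := by
        rw [hofFn_cons]
        exact ⟨z, hz, rfl⟩
      rcases lt_or_eq_of_le (Nat.succ_le_of_lt j.isLt) with hlt | heq
      · exact mem_iUnion.mpr ⟨⟨(j : ℕ) + 1, hlt⟩, mem_iUnion.mpr ⟨Fin.cons i w, hmem⟩⟩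
      · apply hFCkE
        have hsubk := hwk ((Fin.cons i w : Fin ((j : ℕ) + 1) → Fin N) ∘ Fin.cast heq.symm)
        rw [ofFn_comp_cast heq] at hsubk
        exact hsubk hmem
    -- FC ⊆ E
    have hsub2 : FC ⊆ E :=
      attractor_subset S hr1 (fun i => (hL i).weaken (hρr i)) hFC hEc hEne hCE hSE
    -- covering number comparison
    haveI : Nonempty ((j : Fin k) × (Fin (j : ℕ) → Fin N)) := ⟨⟨⟨0, hk0⟩, Fin.elim0⟩⟩
    set M : ℕ := Fintype.card ((j : Fin k) × (Fin (j : ℕ) → Fin N)) with hMdef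
    have hM1 : 1 ≤ M := Fintype.card_pos
    have hcov2 : ∀ δ : ℝ, 0 < δ → coverNum FC δ ≤ M * coverNum FCk δ := by
      intro δ hδ
      refine coverNum_union_images
        (fun p : (j : Fin k) × (Fin (j : ℕ) → Fin N) => compList S (List.ofFn p.2))
        (fun p => lip1 _) FC FCk (hsub2.trans ?_) hδ
      intro x hx
      rw [hE, mem_iUnion] at hx
      obtain ⟨j, hx⟩ := hx
      rw [mem_iUnion] at hx
      obtain ⟨w, hx⟩ := hx
      exact mem_iUnion.mpr ⟨⟨j, w⟩, hx⟩
    -- the limsup computation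
    show ubDim FC = ubDim FCk
    unfold ubDim
    have hev : ∀ᶠ δ in 𝓝[>] (0 : ℝ), 0 < δ ∧ δ < 1 := by
      refine eventually_mem_nhdsWithin.and ?_
      exact eventually_nhdsWithin_of_eventually_nhds (eventually_lt_nhds one_pos)
    have hMpos : (0 : ℝ) < (M : ℝ) := by exact_mod_cast hM1
    refine limsup_eq_limsup_of_le_add (h := fun δ => Real.log M / (-Real.log δ))
      ?_ ?_ ?_ ?_
    · refine hev.mono fun δ hδ => ?_
      refine div_nonneg (Real.log_nonneg ?_) (neg_nonneg.mpr (Real.log_nonpos hδ.1.le hδ.2.le))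
      exact_mod_cast coverNum_pos hFCkne hδ.1
    · refine hev.mono fun δ hδ => ?_
      have hpos : 0 < -Real.log δ := neg_pos.mpr (Real.log_neg hδ.1 hδ.2)
      have hle : Real.log (coverNum FCk δ) ≤ Real.log (coverNum FC δ) :=
        Real.log_le_log (by exact_mod_cast coverNum_pos hFCkne hδ.1)
          (by exact_mod_cast coverNum_mono hsub1 hδ.1)
      exact div_le_div_of_nonneg_right hle hpos.le
    · refine hev.mono fun δ hδ => ?_
      have hpos : 0 < -Real.log δ := neg_pos.mpr (Real.log_neg hδ.1 hδ.2)
      have h1 : (0 : ℝ) < coverNum FCk δ := by exact_mod_cast coverNum_pos hFCkne hδ.1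
      have h2 : (coverNum FC δ : ℝ) ≤ (M : ℝ) * coverNum FCk δ := by
        exact_mod_cast hcov2 δ hδ.1
      have h3 : Real.log (coverNum FC δ) ≤ Real.log M + Real.log (coverNum FCk δ) := by
        calc Real.log (coverNum FC δ) ≤ Real.log ((M : ℝ) * coverNum FCk δ) :=
              Real.log_le_log (by exact_mod_cast coverNum_pos hFCne hδ.1) h2
          _ = Real.log M + Real.log (coverNum FCk δ) :=
              Real.log_mul (ne_of_gt hMpos) (ne_of_gt h1)
      rw [← add_div]
      refine div_le_div_of_nonneg_right ?_ hpos.le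
      linarith
    · refine Filter.Tendsto.div_atTop tendsto_const_nhds ?_
      exact tendsto_neg_atBot_atTop.comp Real.tendsto_log_nhdsGT_zero
end
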